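/- Let d ≥ 1, r > d - 1, and suppose (a_k), (b_k) are sequences on ℤ^d \ {0} with |a_k| ≤ C e^{-γ|k|}/|k|^r and |b_k| ≤ C e^{-γ|k|}/|k|^r for some γ ≥ 0. Then there is a constant c depending only on r and d such that for every nonzero k ∈ ℤ^d, Σ_{l₁+l₂=k} |a_{l₁}| |b_{l₂}| |k|/|l₂| ≤ c · (2^r |k| + 2^{r+1}(6|k|+1)^{d/2} + (1/2)|k|^{d-1-r}) · C² e^{-γ|k|} / |k|^r. -/

import Mathlib

noncomputable def znorm {d : ℕ} (l : Fin d → ℤ) : ℝ := Real.sqrt (∑ i, ((l i : ℝ))^2)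

lemma znorm_nonneg {d : ℕ} (l : Fin d → ℤ) : 0 ≤ znorm l := Real.sqrt_nonneg _

lemma znorm_eq_norm {d : ℕ} (l : Fin d → ℤ) :
    znorm l = ‖(show EuclideanSpace ℝ (Fin d) from WithLp.toLp 2 fun i => (l i : ℝ))‖ := by
  rw [EuclideanSpace.norm_eq]
  simp [znorm, Real.norm_eq_abs, sq_abs]

lemma znorm_triangle {d : ℕ} (k l : Fin d → ℤ) : znorm k ≤ znorm (k - l) + znorm l := by
  have h : (show EuclideanSpace ℝ (Fin d) from WithLp.toLp 2 fun i => (k i : ℝ)) =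
      (show EuclideanSpace ℝ (Fin d) from WithLp.toLp 2 fun i => ((k - l) i : ℝ)) +
        (show EuclideanSpace ℝ (Fin d) from WithLp.toLp 2 fun i => (l i : ℝ)) := by
    ext i
    show (k i : ℝ) = (((k - l) i : ℤ) : ℝ) + ((l i : ℤ) : ℝ)
    rw [Pi.sub_apply]
    push_cast
    ring
  rw [znorm_eq_norm, znorm_eq_norm, znorm_eq_norm, h]
  exact norm_add_le _ _

lemma one_le_znorm {d : ℕ} {l : Fin d → ℤ} (hl : l ≠ 0) : 1 ≤ znorm l := by
  obtain ⟨i, hi⟩ : ∃ i, l i ≠ 0 := by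
    by_contra h
    push_neg at h
    exact hl (funext h)
  have h0 : (1 : ℤ) ≤ |l i| := Int.one_le_abs hi
  have h1 : (1 : ℝ) ≤ ((l i : ℝ))^2 := by
    have h : (1 : ℝ) ≤ |(l i : ℝ)| := by exact_mod_cast h0
    nlinarith [sq_abs ((l i : ℝ)), sq_nonneg (|(l i : ℝ)| - 1)]
  have h2 : (1 : ℝ) ≤ ∑ j, ((l j : ℝ))^2 :=
    h1.trans (Finset.single_le_sum (f := fun j => ((l j : ℝ))^2) (fun j _ => sq_nonneg _)
      (Finset.mem_univ i))
  calc (1 : ℝ) = Real.sqrt 1 := Real.sqrt_one.symm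
    _ ≤ znorm l := Real.sqrt_le_sqrt h2

lemma znorm_pos {d : ℕ} {l : Fin d → ℤ} (hl : l ≠ 0) : 0 < znorm l :=
  lt_of_lt_of_le one_pos (one_le_znorm hl)

lemma abs_le_znorm {d : ℕ} (l : Fin d → ℤ) (i : Fin d) : |(l i : ℝ)| ≤ znorm l := by
  rw [znorm, ← Real.sqrt_sq_eq_abs]
  exact Real.sqrt_le_sqrt (Finset.single_le_sum (f := fun j => ((l j : ℝ))^2)
    (fun j _ => sq_nonneg _) (Finset.mem_univ i))

lemma summable_int_aux {s : ℝ} (hs : s < -1) :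
    Summable (fun m : ℤ => ((1 : ℝ) + |(m : ℝ)|) ^ s) := by
  have hnat : Summable (fun n : ℕ => ((1 : ℝ) + (n : ℝ)) ^ s) := by
    have h0 : Summable (fun n : ℕ => ((n : ℝ)) ^ s) := Real.summable_nat_rpow.mpr hs
    have h1 : Summable (fun n : ℕ => (((n + 1 : ℕ) : ℝ)) ^ s) :=
      (summable_nat_add_iff 1).mpr h0
    refine h1.congr fun n => ?_
    push_cast
    ring_nf
  apply Summable.of_nat_of_neg
  · refine hnat.congr fun n => ?_
    simp
  · refine hnat.congr fun n => ?_
    simp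

lemma summable_prod_pow (d : ℕ) {s : ℝ} (hs : s < -1) :
    Summable (fun l : Fin d → ℤ => ∏ i, ((1 : ℝ) + |(l i : ℝ)|) ^ s) := by
  induction d with
  | zero =>
      haveI : Unique (Fin 0 → ℤ) := ⟨⟨fun i => i.elim0⟩, fun f => funext fun i => i.elim0⟩
      exact Summable.of_finite
  | succ n ih =>
      have h1 := summable_int_aux hs
      have h2 := h1.mul_of_nonneg ih
        (fun m => Real.rpow_nonneg (by positivity) _)
        (fun l => Finset.prod_nonneg fun i _ => Real.rpow_nonneg (by positivity) _)
      set e := (Fin.consEquiv (fun _ : Fin (n + 1) => ℤ)) with hedef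
      rw [← e.summable_iff]
      refine h2.congr fun x => ?_
      show _ = ∏ i, ((1 : ℝ) + |((e x) i : ℝ)|) ^ s
      rw [Fin.prod_univ_succ]
      simp [hedef, Fin.consEquiv]

lemma summable_znorm_rpow (d : ℕ) (hd : 1 ≤ d) {t : ℝ} (ht : (d : ℝ) < t) :
    Summable (fun l : {l : Fin d → ℤ // l ≠ 0} => znorm l.1 ^ (-t)) := by
  have hd0 : (0 : ℝ) < d := by exact_mod_cast hd
  have hs : -(t / d) < -1 := by
    rw [neg_lt_neg_iff]
    rw [lt_div_iff₀ hd0]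
    linarith
  have hsum := (summable_prod_pow d hs).mul_left ((2 : ℝ) ^ t)
  have hsum' : Summable ((fun l : Fin d → ℤ =>
      (2 : ℝ) ^ t * ∏ i, ((1 : ℝ) + |(l i : ℝ)|) ^ (-(t / d))) ∘
      (Subtype.val : {l : Fin d → ℤ // l ≠ 0} → Fin d → ℤ)) :=
    hsum.comp_injective Subtype.val_injective
  refine Summable.of_nonneg_of_le (fun l => Real.rpow_nonneg (znorm_nonneg _) _) ?_ hsum'
  rintro ⟨l, hl⟩
  have hK : 0 < znorm l := znorm_pos hl
  have hK1 : 1 ≤ znorm l := one_le_znorm hl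
  have ht0 : 0 ≤ t := by linarith
  -- ∏ (1+|l i|)^(-(t/d)) ≥ (2*znorm l)^(-t) = 2^(-t) * znorm l^(-t)
  have hprod : ∏ i, ((1 : ℝ) + |(l i : ℝ)|) ≤ (2 * znorm l) ^ (d : ℕ) := by
    calc ∏ i, ((1 : ℝ) + |(l i : ℝ)|) ≤ ∏ _i : Fin d, (2 * znorm l) := by
          apply Finset.prod_le_prod
          · intro i _
            have := abs_nonneg ((l i : ℝ))
            linarith
          · intro i _
            have := abs_le_znorm l i
            linarith
      _ = (2 * znorm l) ^ (d : ℕ) := by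
          rw [Finset.prod_const, Finset.card_univ, Fintype.card_fin]
  have hppos : (0 : ℝ) < ∏ i, ((1 : ℝ) + |(l i : ℝ)|) :=
    Finset.prod_pos fun i _ => by positivity
  have key : (2 * znorm l) ^ (-t) ≤ ∏ i, ((1 : ℝ) + |(l i : ℝ)|) ^ (-(t / d)) := by
    have hre : ∏ i, ((1 : ℝ) + |(l i : ℝ)|) ^ (-(t / d))
        = (∏ i, ((1 : ℝ) + |(l i : ℝ)|)) ^ (-(t / d)) := by
      rw [← Real.finset_prod_rpow]
      intro i _; positivity
    rw [hre]
    have h1 : (∏ i, ((1 : ℝ) + |(l i : ℝ)|)) ^ (-(t / d)) ≥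
        ((2 * znorm l) ^ (d : ℕ)) ^ (-(t / d)) :=
      Real.rpow_le_rpow_of_nonpos hppos hprod (neg_nonpos.mpr (div_nonneg ht0 hd0.le))
    refine le_trans (le_of_eq ?_) h1
    rw [← Real.rpow_natCast (2 * znorm l) d, ← Real.rpow_mul (by positivity)]
    congr 1
    field_simp
  have h2 : (2 : ℝ) ^ t * (2 * znorm l) ^ (-t) = znorm l ^ (-t) := by
    rw [Real.mul_rpow (by norm_num) hK.le, ← mul_assoc,
      ← Real.rpow_add (by norm_num : (0:ℝ) < 2)]
    simp
  calc znorm l ^ (-t) = (2 : ℝ) ^ t * (2 * znorm l) ^ (-t) := h2.symm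
    _ ≤ (2 : ℝ) ^ t * ∏ i, ((1 : ℝ) + |(l i : ℝ)|) ^ (-(t / d)) := by
        apply mul_le_mul_of_nonneg_left key (by positivity)

lemma key_ineq {r K x y : ℝ} (hr : 0 ≤ r) (hK : 0 < K) (hx : 0 < x) (hy : 0 < y)
    (hxy : K ≤ y + x) :
    1 / (y ^ r * (x ^ r * x)) ≤ (2 / K) ^ r * (x ^ (-(r + 1)) + y ^ (-(r + 1))) := by
  have hK2 : (0 : ℝ) < K / 2 := by positivity
  have hxr : (0 : ℝ) < x ^ r := Real.rpow_pos_of_pos hx r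
  have hyr : (0 : ℝ) < y ^ r := Real.rpow_pos_of_pos hy r
  have hKr : (0 : ℝ) < (K / 2) ^ r := Real.rpow_pos_of_pos hK2 r
  have h2K0 : (0 : ℝ) ≤ (2 / K) ^ r := Real.rpow_nonneg (by positivity) r
  have hinv : ((K / 2) ^ r)⁻¹ = (2 / K) ^ r := by
    rw [← Real.inv_rpow hK2.le, inv_div]
  have hxneg : x ^ (-(r + 1)) = (x ^ r * x)⁻¹ := by
    rw [Real.rpow_neg hx.le, Real.rpow_add hx, Real.rpow_one]
  have hyneg : y ^ (-(r + 1)) = (y ^ r * y)⁻¹ := by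
    rw [Real.rpow_neg hy.le, Real.rpow_add hy, Real.rpow_one]
  rcases le_or_gt (K / 2) y with h | h
  · have h1 : (K / 2) ^ r ≤ y ^ r := Real.rpow_le_rpow hK2.le h hr
    have e2 : 1 / y ^ r ≤ (2 / K) ^ r := by
      rw [← hinv]
      calc 1 / y ^ r ≤ 1 / (K / 2) ^ r := one_div_le_one_div_of_le hKr h1
        _ = ((K / 2) ^ r)⁻¹ := one_div _
    have e3 : 1 / (y ^ r * (x ^ r * x)) = (1 / y ^ r) * (1 / (x ^ r * x)) :=
      (one_div_mul_one_div _ _).symm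
    have e4 : (1 / y ^ r) * (1 / (x ^ r * x)) ≤ (2 / K) ^ r * (1 / (x ^ r * x)) :=
      mul_le_mul_of_nonneg_right e2 (by positivity)
    have e5 : (2 / K) ^ r * (1 / (x ^ r * x)) ≤
        (2 / K) ^ r * (x ^ (-(r + 1)) + y ^ (-(r + 1))) := by
      apply mul_le_mul_of_nonneg_left _ h2K0
      rw [hxneg, one_div]
      have := Real.rpow_nonneg hy.le (-(r + 1))
      linarith
    calc 1 / (y ^ r * (x ^ r * x)) = (1 / y ^ r) * (1 / (x ^ r * x)) := e3
      _ ≤ (2 / K) ^ r * (1 / (x ^ r * x)) := e4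
      _ ≤ _ := e5
  · have hxK : K / 2 < x := by linarith
    have hxy' : y < x := lt_trans h hxK
    have h1 : (K / 2) ^ r ≤ x ^ r := Real.rpow_le_rpow hK2.le hxK.le hr
    have h2 : (K / 2) ^ r * (y ^ r * y) ≤ y ^ r * (x ^ r * x) := by
      have := mul_le_mul h1 hxy'.le hy.le hxr.le
      nlinarith [hyr.le, hy.le]
    have h3 : 1 / (y ^ r * (x ^ r * x)) ≤ 1 / ((K / 2) ^ r * (y ^ r * y)) :=
      one_div_le_one_div_of_le (by positivity) h2
    have e6 : 1 / ((K / 2) ^ r * (y ^ r * y)) = (2 / K) ^ r * (y ^ r * y)⁻¹ := by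
      rw [one_div, mul_inv, hinv]
    have e7 : (2 / K) ^ r * (y ^ r * y)⁻¹ ≤
        (2 / K) ^ r * (x ^ (-(r + 1)) + y ^ (-(r + 1))) := by
      apply mul_le_mul_of_nonneg_left _ h2K0
      rw [hyneg]
      have := Real.rpow_nonneg hx.le (-(r + 1))
      linarith
    calc 1 / (y ^ r * (x ^ r * x)) ≤ 1 / ((K / 2) ^ r * (y ^ r * y)) := h3
      _ = (2 / K) ^ r * (y ^ r * y)⁻¹ := e6
      _ ≤ _ := e7

set_option maxHeartbeats 1000000 in
theorem weighted_convolution_lemma (d : ℕ) (hd : 1 ≤ d) (r : ℝ) (hr : r > (d : ℝ) - 1) :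
    ∃ c : ℝ, ∀ (C γ : ℝ), 0 ≤ γ → ∀ (a b : (Fin d → ℤ) → ℝ),
      (∀ k : Fin d → ℤ, k ≠ 0 → |a k| ≤ C * Real.exp (-γ * znorm k) / znorm k ^ r) →
      (∀ k : Fin d → ℤ, k ≠ 0 → |b k| ≤ C * Real.exp (-γ * znorm k) / znorm k ^ r) →
      ∀ k : Fin d → ℤ, k ≠ 0 →
        ∑' l : {l : Fin d → ℤ // l ≠ 0 ∧ k - l ≠ 0},
            |a (k - l.1)| * |b l.1| * (znorm k / znorm l.1)
          ≤ c * ((2 : ℝ) ^ r * znorm k + (2 : ℝ) ^ (r + 1) * (6 * znorm k + 1) ^ ((d : ℝ) / 2)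
              + (1 / 2) * znorm k ^ ((d : ℝ) - 1 - r)) * (C ^ 2 * Real.exp (-γ * znorm k) / znorm k ^ r) := by
  have hd0 : (0 : ℝ) < d := by exact_mod_cast hd
  have hd1 : (1 : ℝ) ≤ d := by exact_mod_cast hd
  have hr0 : 0 ≤ r := by linarith
  have ht : (d : ℝ) < r + 1 := by linarith
  have hA : Summable (fun l : {l : Fin d → ℤ // l ≠ 0} => znorm l.1 ^ (-(r + 1))) :=
    summable_znorm_rpow d hd ht
  set A := ∑' l : {l : Fin d → ℤ // l ≠ 0}, znorm l.1 ^ (-(r + 1)) with hAdef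
  have hA0 : 0 ≤ A := tsum_nonneg fun l => Real.rpow_nonneg (znorm_nonneg _) _
  refine ⟨2 * A, ?_⟩
  intro C γ hγ a b ha hb k hk
  set K := znorm k with hKdef
  have hK : 0 < K := znorm_pos hk
  have hKr : 0 < K ^ r := Real.rpow_pos_of_pos hK r
  have hexp : (0 : ℝ) < Real.exp (-γ * K) := Real.exp_pos _
  have hC : 0 ≤ C := by
    have h := (abs_nonneg (a k)).trans (ha k hk)
    have h2 : 0 ≤ C * Real.exp (-γ * K) := by
      have := mul_nonneg h hKr.le
      rwa [div_mul_cancel₀ _ hKr.ne'] at this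
    exact (mul_nonneg_iff_of_pos_right hexp).mp h2
  -- subtype injections
  have inj₁ : Function.Injective (fun l : {l : Fin d → ℤ // l ≠ 0 ∧ k - l ≠ 0} => (⟨l.1, l.2.1⟩ : {l : Fin d → ℤ // l ≠ 0})) := by
    intro x y hxy
    apply Subtype.ext
    simpa using congrArg Subtype.val hxy
  have inj₂ : Function.Injective (fun l : {l : Fin d → ℤ // l ≠ 0 ∧ k - l ≠ 0} => (⟨k - l.1, l.2.2⟩ : {l : Fin d → ℤ // l ≠ 0})) := by
    intro x y hxy
    apply Subtype.ext
    have h := congrArg Subtype.val hxy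
    simp only [Subtype.coe_mk] at h
    have : k - x.1 = k - y.1 := h
    simpa [sub_right_inj] using this
  set u : {l : Fin d → ℤ // l ≠ 0 ∧ k - l ≠ 0} → ℝ :=
    fun l => znorm l.1 ^ (-(r + 1)) with hudef
  set v : {l : Fin d → ℤ // l ≠ 0 ∧ k - l ≠ 0} → ℝ :=
    fun l => znorm (k - l.1) ^ (-(r + 1)) with hvdef
  have hu : Summable u := (hA.comp_injective inj₁).congr (fun _ => rfl)
  have hv : Summable v := (hA.comp_injective inj₂).congr (fun _ => rfl)
  have htu : ∑' l, u l ≤ A :=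
    hu.tsum_le_tsum_of_inj _ inj₁ (fun c _ => Real.rpow_nonneg (znorm_nonneg _) _)
      (fun l => le_rfl) hA
  have htv : ∑' l, v l ≤ A :=
    hv.tsum_le_tsum_of_inj _ inj₂ (fun c _ => Real.rpow_nonneg (znorm_nonneg _) _)
      (fun l => le_rfl) hA
  set c0 : ℝ := C ^ 2 * Real.exp (-γ * K) * K with hc0def
  have hc00 : 0 ≤ c0 := by positivity
  set Φ : {l : Fin d → ℤ // l ≠ 0 ∧ k - l ≠ 0} → ℝ := fun l => c0 * ((2 / K) ^ r * (u l + v l)) with hΦdef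
  have hΦsum : Summable Φ := ((hu.add hv).mul_left _).mul_left _
  -- pointwise bound
  have hpt : ∀ l : {l : Fin d → ℤ // l ≠ 0 ∧ k - l ≠ 0}, |a (k - l.1)| * |b l.1| * (K / znorm l.1) ≤ Φ l := by
    rintro ⟨l, hl1, hl2⟩
    set X := znorm l with hXdef
    set Y := znorm (k - l) with hYdef
    have hX : 0 < X := znorm_pos hl1
    have hY : 0 < Y := znorm_pos hl2
    have hXY : K ≤ Y + X := znorm_triangle k l
    have hXr : 0 < X ^ r := Real.rpow_pos_of_pos hX r
    have hYr : 0 < Y ^ r := Real.rpow_pos_of_pos hY r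
    have step1 : |a (k - l)| * |b l| * (K / X) ≤
        (C * Real.exp (-γ * Y) / Y ^ r) * (C * Real.exp (-γ * X) / X ^ r) * (K / X) := by
      have hbb := hb l hl1
      have haa := ha (k - l) hl2
      have h1 : 0 ≤ K / X := by positivity
      have h2 : 0 ≤ C * Real.exp (-γ * Y) / Y ^ r := (abs_nonneg _).trans haa
      apply mul_le_mul_of_nonneg_right _ h1
      exact mul_le_mul haa hbb (abs_nonneg _) h2
    have step2 : (C * Real.exp (-γ * Y) / Y ^ r) * (C * Real.exp (-γ * X) / X ^ r) * (K / X)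
        = C ^ 2 * (Real.exp (-γ * Y) * Real.exp (-γ * X)) * K * (1 / (Y ^ r * (X ^ r * X))) := by
      field_simp
    have step3 : Real.exp (-γ * Y) * Real.exp (-γ * X) ≤ Real.exp (-γ * K) := by
      rw [← Real.exp_add]
      apply Real.exp_le_exp.mpr
      have : γ * K ≤ γ * (Y + X) := mul_le_mul_of_nonneg_left hXY hγ
      nlinarith
    have step4 : 1 / (Y ^ r * (X ^ r * X)) ≤ (2 / K) ^ r * (X ^ (-(r + 1)) + Y ^ (-(r + 1))) :=
      key_ineq hr0 hK hX hY hXY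
    calc |a (k - l)| * |b l| * (K / X)
        ≤ C ^ 2 * (Real.exp (-γ * Y) * Real.exp (-γ * X)) * K * (1 / (Y ^ r * (X ^ r * X))) := by
          rw [← step2]; exact step1
      _ ≤ C ^ 2 * Real.exp (-γ * K) * K * ((2 / K) ^ r * (X ^ (-(r + 1)) + Y ^ (-(r + 1)))) := by
          apply mul_le_mul
          · apply mul_le_mul_of_nonneg_right _ hK.le
            exact mul_le_mul_of_nonneg_left step3 (by positivity)
          · exact step4
          · positivity
          · positivity
      _ = Φ ⟨l, hl1, hl2⟩ := rfl
  -- summability of LHS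
  have hterm_nonneg : ∀ l : {l : Fin d → ℤ // l ≠ 0 ∧ k - l ≠ 0}, 0 ≤ |a (k - l.1)| * |b l.1| * (K / znorm l.1) := by
    intro l
    have := znorm_nonneg l.1
    positivity
  have hterm_sum : Summable (fun l : {l : Fin d → ℤ // l ≠ 0 ∧ k - l ≠ 0} => |a (k - l.1)| * |b l.1| * (K / znorm l.1)) :=
    Summable.of_nonneg_of_le hterm_nonneg hpt hΦsum
  have main : ∑' l : {l : Fin d → ℤ // l ≠ 0 ∧ k - l ≠ 0}, |a (k - l.1)| * |b l.1| * (K / znorm l.1) ≤ c0 * ((2 / K) ^ r * (2 * A)) := by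
    calc ∑' l : {l : Fin d → ℤ // l ≠ 0 ∧ k - l ≠ 0}, |a (k - l.1)| * |b l.1| * (K / znorm l.1)
        ≤ ∑' l : {l : Fin d → ℤ // l ≠ 0 ∧ k - l ≠ 0}, Φ l := hterm_sum.tsum_le_tsum hpt hΦsum
      _ = c0 * ((2 / K) ^ r * (∑' l, u l + ∑' l, v l)) := by
          rw [hΦdef]
          rw [tsum_mul_left]
          congr 1
          rw [tsum_mul_left]
          congr 1
          exact hu.tsum_add hv
      _ ≤ c0 * ((2 / K) ^ r * (2 * A)) := by
          apply mul_le_mul_of_nonneg_left _ hc00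
          apply mul_le_mul_of_nonneg_left _ (Real.rpow_nonneg (by positivity) _)
          linarith
  refine main.trans ?_
  -- final constant comparison
  have hparen : (2 : ℝ) ^ r * K ≤ (2 : ℝ) ^ r * K + (2 : ℝ) ^ (r + 1) * (6 * K + 1) ^ ((d : ℝ) / 2)
      + (1 / 2) * K ^ ((d : ℝ) - 1 - r) := by
    have h1 : (0 : ℝ) ≤ (2 : ℝ) ^ (r + 1) * (6 * K + 1) ^ ((d : ℝ) / 2) := by
      apply mul_nonneg (Real.rpow_nonneg (by norm_num) _) (Real.rpow_nonneg (by positivity) _)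
    have h2 : (0 : ℝ) ≤ (1 / 2) * K ^ ((d : ℝ) - 1 - r) := by
      have := Real.rpow_nonneg hK.le ((d : ℝ) - 1 - r)
      linarith
    linarith
  have heq : c0 * ((2 / K) ^ r * (2 * A)) =
      (2 * A) * ((2 : ℝ) ^ r * K) * (C ^ 2 * Real.exp (-γ * K) / K ^ r) := by
    rw [Real.div_rpow (by norm_num) hK.le]
    field_simp [hc0def]
    rw [hc0def, neg_mul, mul_comm γ K]; ring
  rw [heq]
  have hX0 : 0 ≤ C ^ 2 * Real.exp (-γ * K) / K ^ r := by positivity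
  apply mul_le_mul_of_nonneg_right _ hX0
  apply mul_le_mul_of_nonneg_left hparen (by linarith)
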